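/- Let K be a field with a nontrivial Krull valuation v into a linearly ordered abelian group Γ, and let A(x) = Σ_{i=0}^n a_i x^i ∈ K[x] be an Eisenstein–Dumas polynomial at v of degree n. If t ∈ K satisfies n·v(t) > v(a_0) − v(a_n), then A(x+t) is an Eisenstein–Dumas polynomial at v. -/

import Mathlib

open Polynomial

/-- A Krull valuation on a field `K` with values in `Γ ∪ {∞}` (here `WithTop Γ`), where `Γ` is a
linearly ordered abelian group: `v a = ∞ ↔ a = 0`, `v (a*b) = v a + v b`, and
`v (a+b) ≥ min (v a) (v b)`. -/
structure KrullValuation (K : Type*) [Field K] (Γ : Type*) [AddCommGroup Γ] [LinearOrder Γ] [IsOrderedAddMonoid Γ] where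
  v : K → WithTop Γ
  eq_top_iff : ∀ a : K, v a = ⊤ ↔ a = 0
  map_mul : ∀ a b : K, v (a * b) = v a + v b
  min_le_add : ∀ a b : K, min (v a) (v b) ≤ v (a + b)

variable {K : Type*} [Field K] {Γ : Type*} [AddCommGroup Γ] [LinearOrder Γ] [IsOrderedAddMonoid Γ]

/-- The valuation `w` is nontrivial. -/
def KrullValuation.IsNontrivial (w : KrullValuation K Γ) : Prop :=
  ∃ a : K, a ≠ 0 ∧ w.v a ≠ 0

/-- `A` is an Eisenstein–Dumas polynomial of degree `n` at the valuation `w`: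
(D0) `a₀ * aₙ ≠ 0`, (D1) `v(a₀) − v(aₙ) ∉ kΓ` for every integer `k > 1` dividing `n`
(stated as: `v(a₀) ≠ v(aₙ) + k•g` for all `g ∈ Γ`),
(D2) `n·v(aᵢ) ≥ (n−i)·v(a₀) + i·v(aₙ)` for `0 ≤ i ≤ n`. -/
def IsEisensteinDumas (w : KrullValuation K Γ) (n : ℕ) (A : K[X]) : Prop :=
  A.natDegree = n ∧
  A.coeff 0 * A.coeff n ≠ 0 ∧
  (∀ k : ℕ, 1 < k → k ∣ n → ∀ g : Γ,
    w.v (A.coeff 0) ≠ w.v (A.coeff n) + ((k • g : Γ) : WithTop Γ)) ∧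
  (∀ i ≤ n, (n - i) • w.v (A.coeff 0) + i • w.v (A.coeff n) ≤ n • w.v (A.coeff i))

/-! ### Auxiliary lemmas -/

section Aux

-- `n • ↑x = ↑(n • x)` in `WithTop Γ`
lemma coe_nsmul' (n : ℕ) (x : Γ) : n • ((x : WithTop Γ)) = ((n • x : Γ) : WithTop Γ) := by
  induction n with
  | zero => simp
  | succ n ih => rw [succ_nsmul, succ_nsmul, ih, WithTop.coe_add]

lemma top_nsmul' {n : ℕ} (hn : n ≠ 0) : n • (⊤ : WithTop Γ) = ⊤ := by
  cases n with
  | zero => exact absurd rfl hn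
  | succ m => rw [succ_nsmul]; exact add_top _

lemma nsmul_mono' {x y : WithTop Γ} (h : x ≤ y) (n : ℕ) : n • x ≤ n • y := by
  induction n with
  | zero => simp
  | succ m ih => rw [succ_nsmul, succ_nsmul]; exact add_le_add ih h

lemma lt_of_nsmul_lt_nsmul' {n : ℕ} {x y : WithTop Γ} (h : n • x < n • y) : x < y := by
  by_contra hle
  push_neg at hle
  exact absurd (nsmul_mono' hle n) (not_le.2 h)

/-- The key arithmetic inequality in `Γ`. -/
lemma key_ineq {α β τ γ : Γ} {n j d : ℕ} (hjd : j + d ≤ n)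
    (hτ : α ≤ β + n • τ) (hγ : (n - (j + d)) • α + (j + d) • β ≤ n • γ) :
    (n - j) • α + j • β ≤ n • (γ + d • τ) := by
  have h1 : d • α ≤ d • β + (n * d) • τ := by
    calc d • α ≤ d • (β + n • τ) := nsmul_le_nsmul_right hτ d
      _ = d • β + (n * d) • τ := by rw [smul_add, mul_comm, mul_smul]
  have e1 : (n - j) • α = (n - (j + d)) • α + d • α := by
    rw [← add_nsmul]; congr 1; omega
  calc (n - j) • α + j • β = ((n - (j + d)) • α + d • α) + j • β := by rw [e1]
    _ ≤ ((n - (j + d)) • α + (d • β + (n * d) • τ)) + j • β :=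
        add_le_add_left (add_le_add_right h1 _) _
    _ = ((n - (j + d)) • α + (j + d) • β) + (n * d) • τ := by rw [add_nsmul]; abel
    _ ≤ n • γ + (n * d) • τ := add_le_add_left hγ _
    _ = n • (γ + d • τ) := by rw [smul_add, mul_smul]

/-- Strict version, for the term estimate in the constant coefficient. -/
lemma key_ineq_strict {α β τ γ : Γ} {n i : ℕ} (hi1 : 1 ≤ i) (hin : i ≤ n)
    (hτ : α < β + n • τ) (hγ : (n - i) • α + i • β ≤ n • γ) :
    n • α < n • (γ + i • τ) := by
  have h1 : i • α < i • β + (n * i) • τ := by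
    calc i • α < i • (β + n • τ) := nsmul_lt_nsmul_right (by omega) hτ
      _ = i • β + (n * i) • τ := by rw [smul_add, mul_comm, mul_smul]
  calc n • α = (n - i) • α + i • α := by rw [← add_nsmul]; congr 1; omega
    _ < (n - i) • α + (i • β + (n * i) • τ) := add_lt_add_right h1 _
    _ = ((n - i) • α + i • β) + (n * i) • τ := by abel
    _ ≤ n • γ + (n * i) • τ := add_le_add_left hγ _
    _ = n • (γ + i • τ) := by rw [smul_add, mul_smul]

namespace KrullValuation

variable (w : KrullValuation K Γ)

lemma v_zero : w.v 0 = ⊤ := (w.eq_top_iff 0).2 rfl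

lemma v_one : w.v 1 = 0 := by
  have h := w.map_mul 1 1
  rw [mul_one] at h
  cases hγ : w.v (1 : K) with
  | top => exact absurd ((w.eq_top_iff 1).1 hγ) one_ne_zero
  | coe γ =>
    rw [hγ, ← WithTop.coe_add] at h
    have hγ2 : γ = γ + γ := WithTop.coe_injective h
    have : γ = 0 := by
      have := add_left_cancel (a := γ) (b := (0 : Γ)) (c := γ) (by rw [add_zero, ← hγ2])
      exact this.symm
    rw [this]; rfl

lemma v_neg (a : K) : w.v (-a) = w.v a := by
  have hm : w.v (-1 : K) = 0 := by
    have h : w.v (-1 : K) + w.v (-1 : K) = 0 := by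
      rw [← w.map_mul, neg_one_mul, neg_neg, w.v_one]
    cases hγ : w.v (-1 : K) with
    | top => rw [hγ, top_add] at h; exact absurd h (by simp)
    | coe γ =>
      rw [hγ, ← WithTop.coe_add] at h
      have h2 : γ + γ = 0 := by exact_mod_cast h
      have hγ0 : γ = 0 := by
        rcases lt_trichotomy γ 0 with hlt | h00 | hgt
        · have h3 := add_lt_add hlt hlt
          rw [add_zero] at h3
          exact absurd h2 h3.ne
        · exact h00
        · have h3 := add_lt_add hgt hgt
          rw [add_zero] at h3
          exact absurd h2 h3.ne'
      rw [hγ0]; rfl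
  calc w.v (-a) = w.v ((-1) * a) := by rw [neg_one_mul]
    _ = w.v (-1 : K) + w.v a := w.map_mul _ _
    _ = w.v a := by rw [hm, zero_add]

lemma v_add_eq_of_lt {a b : K} (h : w.v a < w.v b) : w.v (a + b) = w.v a := by
  refine le_antisymm ?_ ?_
  · have h2 : min (w.v (a + b)) (w.v b) ≤ w.v a := by
      have h3 := w.min_le_add (a + b) (-b)
      rw [add_neg_cancel_right, w.v_neg] at h3
      exact h3
    rcases min_le_iff.1 h2 with h4 | h4
    · exact h4
    · exact absurd h4 (not_le.2 h)
  · have := w.min_le_add a b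
    rwa [min_eq_left h.le] at this

lemma v_pow (a : K) (m : ℕ) : w.v (a ^ m) = m • w.v a := by
  induction m with
  | zero => simp [w.v_one]
  | succ m ih => rw [pow_succ, w.map_mul, ih, succ_nsmul]

lemma v_natCast_nonneg (m : ℕ) : 0 ≤ w.v (m : K) := by
  induction m with
  | zero => rw [Nat.cast_zero, w.v_zero]; exact le_top
  | succ m ih =>
    rw [Nat.cast_succ]
    refine le_trans ?_ (w.min_le_add (m : K) 1)
    rw [w.v_one]
    exact le_min ih le_rfl

lemma lt_v_sum {ι : Type*} (s : Finset ι) (f : ι → K) (c : WithTop Γ) (hc : c ≠ ⊤)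
    (h : ∀ i ∈ s, c < w.v (f i)) : c < w.v (∑ i ∈ s, f i) := by
  classical
  induction s using Finset.induction with
  | empty => rw [Finset.sum_empty, w.v_zero]; exact lt_top_iff_ne_top.2 hc
  | @insert a s ha ih =>
    rw [Finset.sum_insert ha]
    have h1 : c < min (w.v (f a)) (w.v (∑ i ∈ s, f i)) :=
      lt_min (h a (Finset.mem_insert_self a s)) (ih fun i hi => h i (Finset.mem_insert_of_mem hi))
    exact lt_of_lt_of_le h1 (w.min_le_add _ _)

lemma le_nsmul_v_sum {ι : Type*} (s : Finset ι) (f : ι → K) (c : WithTop Γ) (n : ℕ) (hn : n ≠ 0)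
    (h : ∀ i ∈ s, c ≤ n • w.v (f i)) : c ≤ n • w.v (∑ i ∈ s, f i) := by
  classical
  induction s using Finset.induction with
  | empty => rw [Finset.sum_empty, w.v_zero, top_nsmul' hn]; exact le_top
  | @insert a s ha ih =>
    rw [Finset.sum_insert ha]
    rcases le_total (w.v (f a)) (w.v (∑ i ∈ s, f i)) with hle | hle
    · have h2 : w.v (f a) ≤ w.v (f a + ∑ i ∈ s, f i) := by
        have := w.min_le_add (f a) (∑ i ∈ s, f i)
        rwa [min_eq_left hle] at this
      exact le_trans (h a (Finset.mem_insert_self a s)) (nsmul_mono' h2 n)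
    · have h2 : w.v (∑ i ∈ s, f i) ≤ w.v (f a + ∑ i ∈ s, f i) := by
        have := w.min_le_add (f a) (∑ i ∈ s, f i)
        rwa [min_eq_right hle] at this
      exact le_trans (ih fun i hi => h i (Finset.mem_insert_of_mem hi)) (nsmul_mono' h2 n)

end KrullValuation

end Aux

/-- If `A` is an Eisenstein–Dumas polynomial of degree `n` at `v` and `t ∈ K` satisfies
`n·v(t) > v(a₀) − v(aₙ)`, then `A(x+t)` is an Eisenstein–Dumas polynomial at `v`. -/
theorem eisensteinDumas_translate (w : KrullValuation K Γ) (hw : w.IsNontrivial)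
    (n : ℕ) (A : K[X]) (hA : IsEisensteinDumas w n A) (t : K)
    (ht : w.v (A.coeff 0) < n • w.v t + w.v (A.coeff n)) :
    IsEisensteinDumas w n (A.comp (X + C t)) := by
  obtain ⟨hdeg, h0, hD1, hD2⟩ := hA
  have hn : n ≠ 0 := by
    rintro rfl
    exact hD1 2 one_lt_two (dvd_zero 2) 0 (by simp)
  have ha0 : A.coeff 0 ≠ 0 := left_ne_zero_of_mul h0
  have han : A.coeff n ≠ 0 := right_ne_zero_of_mul h0
  rcases eq_or_ne t 0 with rfl | htz
  · rw [C_0, add_zero, comp_X]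
    exact ⟨hdeg, h0, hD1, hD2⟩
  -- extract finite values
  obtain ⟨α, hα⟩ : ∃ α : Γ, w.v (A.coeff 0) = α := by
    cases h : w.v (A.coeff 0) with
    | top => exact absurd ((w.eq_top_iff _).1 h) ha0
    | coe α => exact ⟨α, rfl⟩
  obtain ⟨β, hβ⟩ : ∃ β : Γ, w.v (A.coeff n) = β := by
    cases h : w.v (A.coeff n) with
    | top => exact absurd ((w.eq_top_iff _).1 h) han
    | coe β => exact ⟨β, rfl⟩
  obtain ⟨τ, hτ⟩ : ∃ τ : Γ, w.v t = τ := by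
    cases h : w.v t with
    | top => exact absurd ((w.eq_top_iff _).1 h) htz
    | coe τ => exact ⟨τ, rfl⟩
  have htΓ : α < β + n • τ := by
    rw [hα, hβ, hτ, coe_nsmul', ← WithTop.coe_add, WithTop.coe_lt_coe, add_comm] at ht
    exact ht
  -- D2 hypothesis in Γ
  have hD2Γ : ∀ i ≤ n, ∀ γ : Γ, w.v (A.coeff i) = γ →
      (n - i) • α + i • β ≤ n • γ := by
    intro i hi γ hγ
    have := hD2 i hi
    rw [hα, hβ, hγ, coe_nsmul', coe_nsmul', coe_nsmul', ← WithTop.coe_add,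
      WithTop.coe_le_coe] at this
    exact this
  -- strict per-term estimate for the constant coefficient
  have hvterm : ∀ i, 1 ≤ i → (↑α : WithTop Γ) < w.v (A.coeff i * t ^ i) := by
    intro i hi
    rcases le_or_gt i n with hin | hin
    · rcases eq_or_ne (A.coeff i) 0 with h | h
      · rw [h, zero_mul, w.v_zero]
        exact lt_top_iff_ne_top.2 (by simp)
      · obtain ⟨γ, hγ⟩ : ∃ γ : Γ, w.v (A.coeff i) = γ := by
          cases hh : w.v (A.coeff i) with
          | top => exact absurd ((w.eq_top_iff _).1 hh) h
          | coe γ => exact ⟨γ, rfl⟩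
        have hstrict := key_ineq_strict hi hin htΓ (hD2Γ i hin γ hγ)
        have hlt : α < γ + i • τ := lt_of_nsmul_lt_nsmul_right n hstrict
        have heq : w.v (A.coeff i * t ^ i) = ((γ + i • τ : Γ) : WithTop Γ) := by
          rw [w.map_mul, w.v_pow, hγ, hτ, coe_nsmul', ← WithTop.coe_add]
        rw [heq]
        exact_mod_cast hlt
    · have hc : A.coeff i = 0 := coeff_eq_zero_of_natDegree_lt (by rw [hdeg]; exact hin)
      rw [hc, zero_mul, w.v_zero]
      exact lt_top_iff_ne_top.2 (by simp)
  -- valuation of A(t)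
  have hvb0 : w.v (A.eval t) = (↑α : WithTop Γ) := by
    rw [eval_eq_sum_range, hdeg, Finset.sum_range_succ', pow_zero, mul_one, add_comm]
    rw [w.v_add_eq_of_lt, hα]
    rw [hα]
    exact w.lt_v_sum _ _ _ (by simp) (fun i _ => hvterm (i + 1) (by omega))
  rw [← taylor_apply]
  have hdB : (taylor t A).natDegree = n := by rw [natDegree_taylor, hdeg]
  have hb0 : (taylor t A).coeff 0 = A.eval t := taylor_coeff_zero t A
  have hbn : (taylor t A).coeff n = A.coeff n := by
    have h1 : (taylor t A).coeff n = (taylor t A).leadingCoeff := by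
      rw [leadingCoeff, hdB]
    have h2 : A.coeff n = A.leadingCoeff := by rw [leadingCoeff, hdeg]
    rw [h1, h2, taylor_apply, leadingCoeff_comp (by rw [natDegree_X_add_C]; exact one_ne_zero),
      leadingCoeff_X_add_C, one_pow, mul_one]
  have hvB0 : w.v ((taylor t A).coeff 0) = (↑α : WithTop Γ) := by rw [hb0]; exact hvb0
  have hB0ne : (taylor t A).coeff 0 ≠ 0 := by
    intro h
    rw [← w.eq_top_iff, hvB0] at h
    exact (by simp : (↑α : WithTop Γ) ≠ ⊤) h
  refine ⟨hdB, mul_ne_zero hB0ne (hbn ▸ han), ?_, ?_⟩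
  · intro k hk hkn g
    rw [hvB0, hbn, ← hα]
    exact hD1 k hk hkn g
  · intro j hj
    rw [hvB0, hbn, hβ, taylor_coeff]
    have hdh : (hasseDeriv j A).natDegree < n + 1 := by
      have := natDegree_hasseDeriv_le A j
      rw [hdeg] at this
      omega
    rw [eval_eq_sum_range' hdh]
    rw [coe_nsmul', coe_nsmul', ← WithTop.coe_add]
    refine w.le_nsmul_v_sum _ _ _ n hn ?_
    intro m _
    rw [hasseDeriv_coeff, mul_assoc]
    rcases eq_or_ne (A.coeff (m + j)) 0 with h | h
    · rw [h, zero_mul, mul_zero, w.v_zero, top_nsmul' hn]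
      exact le_top
    · have hmn : m + j ≤ n := by
        by_contra hgt
        exact h (coeff_eq_zero_of_natDegree_lt (by rw [hdeg]; omega))
      obtain ⟨γ, hγ⟩ : ∃ γ : Γ, w.v (A.coeff (m + j)) = γ := by
        cases hh : w.v (A.coeff (m + j)) with
        | top => exact absurd ((w.eq_top_iff _).1 hh) h
        | coe γ => exact ⟨γ, rfl⟩
      have hd2 : (n - (j + m)) • α + (j + m) • β ≤ n • γ := by
        rw [add_comm j m]
        exact hD2Γ (m + j) hmn γ hγ
      have hkey : (n - j) • α + j • β ≤ n • (γ + m • τ) :=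
        key_ineq (by omega) htΓ.le hd2
      have heq : w.v (A.coeff (m + j) * t ^ m) = ((γ + m • τ : Γ) : WithTop Γ) := by
        rw [w.map_mul, w.v_pow, hγ, hτ, coe_nsmul', ← WithTop.coe_add]
      have hv1 : ((γ + m • τ : Γ) : WithTop Γ) ≤
          w.v ((((m + j).choose j : ℕ) : K) * (A.coeff (m + j) * t ^ m)) := by
        rw [w.map_mul, heq]
        exact le_add_of_nonneg_left (w.v_natCast_nonneg _)
      calc ((((n - j) • α + j • β : Γ)) : WithTop Γ)
          ≤ ((n • (γ + m • τ) : Γ) : WithTop Γ) := by exact_mod_cast hkey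
        _ = n • ((γ + m • τ : Γ) : WithTop Γ) := (coe_nsmul' _ _).symm
        _ ≤ n • w.v ((((m + j).choose j : ℕ) : K) * (A.coeff (m + j) * t ^ m)) :=
            nsmul_mono' hv1 n
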